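/- Fix q ∈ (0,1). Let F be the CDF of any probability distribution on [0,∞) with mean at most 1, and let â be the SAA decision based on n IID samples from F. For any δ ∈ (0,1), if n ≥ 2·log(2/δ)/(1−q)², then with probability at least 1−δ, the additive regret satisfies L(â) − L(a*) ≤ (2/(1−q))·√(log(2/δ)/(2n)). -/

import Mathlib

open MeasureTheory Set

noncomputable section

/-- The Newsvendor loss `ℓ(a,Z) = q·max{Z−a,0} + (1−q)·max{a−Z,0}` with critical quantile `q`. -/
def nvLoss (q a z : ℝ) : ℝ := q * max (z - a) 0 + (1 - q) * max (a - z) 0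

/-- The expected Newsvendor loss `L(a)` under the demand distribution `μ`. -/
def expLoss (q : ℝ) (μ : Measure ℝ) (a : ℝ) : ℝ := ∫ z, nvLoss q a z ∂μ

/-- The CDF of the demand distribution `μ`. -/
def cdf' (μ : Measure ℝ) (z : ℝ) : ℝ := (μ (Iic z)).toReal

/-- The optimal decision `a* = inf {a ≥ 0 : F(a) ≥ q}`. -/
def optDec (q : ℝ) (μ : Measure ℝ) : ℝ := sInf {a : ℝ | 0 ≤ a ∧ q ≤ cdf' μ a}

/-- The empirical CDF of the samples `ω : Fin n → ℝ`. -/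
def empCdf (n : ℕ) (ω : Fin n → ℝ) (z : ℝ) : ℝ :=
  (∑ i : Fin n, if ω i ≤ z then (1 : ℝ) else 0) / n

/-- The SAA (sample average approximation) decision `â = inf {a ≥ 0 : F̂(a) ≥ q}`. -/
def saa (q : ℝ) (n : ℕ) (ω : Fin n → ℝ) : ℝ := sInf {a : ℝ | 0 ≤ a ∧ q ≤ empCdf n ω a}

/-- The joint law of `n` iid samples from `μ`. -/
def iid (μ : Measure ℝ) (n : ℕ) : Measure (Fin n → ℝ) := Measure.pi fun _ => μ

/-- A distribution `μ` is `(β,γ,ζ)`-clustered if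
`|a − a*| ≤ (1/γ)·|F(a) − q|^{1/(β+1)}` for all `a ∈ [a*−ζ, a*+ζ]`. -/
def Clustered (q β γ ζ : ℝ) (μ : Measure ℝ) : Prop :=
  ∀ a ∈ Icc (optDec q μ - ζ) (optDec q μ + ζ),
    |a - optDec q μ| ≤ (1 / γ) * |cdf' μ a - q| ^ ((1 : ℝ) / (β + 1))

section Bernoulli
open Real

lemma bernoulli_mgf_le {p : ℝ} (hp0 : 0 ≤ p) (hp1 : p ≤ 1) (l : ℝ) :
    p * Real.exp l + (1 - p) ≤ Real.exp (l * p + l ^ 2 / 8) := by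
  set D : ℝ → ℝ := fun x => p * Real.exp x + (1 - p) with hDdef
  have hD : ∀ x, 0 < D x := by
    intro x
    rcases lt_or_ge p 1 with h | h
    · have : 0 ≤ p * Real.exp x := mul_nonneg hp0 (exp_pos x).le
      simp only [hDdef]; nlinarith
    · have hp : p = 1 := le_antisymm hp1 h
      simp only [hDdef, hp]; simpa using exp_pos x
  set u : ℝ → ℝ := fun x => p * Real.exp x / D x with hudef
  have hDderiv : ∀ x, HasDerivAt D (p * Real.exp x) x := by
    intro x
    exact ((Real.hasDerivAt_exp x).const_mul p).add_const (1 - p)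
  have hu01 : ∀ x, 0 ≤ u x ∧ u x ≤ 1 := by
    intro x
    constructor
    · exact div_nonneg (mul_nonneg hp0 (exp_pos x).le) (hD x).le
    · rw [hudef, div_le_one (hD x)]
      simp only [hDdef]; nlinarith
  have huderiv : ∀ x, HasDerivAt u (u x * (1 - u x)) x := by
    intro x
    have h1 : HasDerivAt (fun y => p * Real.exp y) (p * Real.exp x) x :=
      (Real.hasDerivAt_exp x).const_mul p
    have h := h1.div (hDderiv x) (hD x).ne'
    have hne := (hD x).ne'
    have e : u x * (1 - u x) = (p * rexp x * D x - p * rexp x * (p * rexp x)) / D x ^ 2 := by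
      simp only [hudef]
      field_simp
    rw [e, hudef]
    exact h
  have hu0 : u 0 = p := by simp [hudef, hDdef]
  have hulip : ∀ x, |u x - p| ≤ 1/4 * |x| := by
    intro x
    have := Convex.norm_image_sub_le_of_norm_hasDerivWithin_le
      (f := u) (f' := fun y => u y * (1 - u y)) (C := 1/4) (s := univ)
      (fun y _ => (huderiv y).hasDerivWithinAt)
      (fun y _ => by
        obtain ⟨h1, h2⟩ := hu01 y
        rw [Real.norm_eq_abs, abs_le]
        constructor
        · nlinarith
        · nlinarith [sq_nonneg (u y - 1/2)])
      convex_univ (mem_univ 0) (mem_univ x)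
    rw [← hu0]
    simpa [Real.norm_eq_abs] using this
  set h : ℝ → ℝ := fun x => x * p + x ^ 2 / 8 - Real.log (D x) with hhdef
  have hhderiv : ∀ x, HasDerivAt h (p + x / 4 - u x) x := by
    intro x
    have hlog : HasDerivAt (fun y => Real.log (D y)) (p * Real.exp x / D x) x :=
      (hDderiv x).log (hD x).ne'
    have h1 : HasDerivAt (fun y : ℝ => y * p + y ^ 2 / 8) (p + x / 4) x := by
      have := ((hasDerivAt_id x).mul_const p).add
        (((hasDerivAt_pow 2 x)).div_const 8)
      refine this.congr_deriv ?_
      norm_num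
      ring
    exact h1.sub hlog
  have hdiff : ∀ x, DifferentiableAt ℝ h x := fun x => (hhderiv x).differentiableAt
  have hderiv_eq : ∀ x, deriv h x = p + x / 4 - u x := fun x => (hhderiv x).deriv
  have hh0 : h 0 = 0 := by simp [hhdef, hDdef]
  have key : ∀ x, 0 ≤ h x := by
    intro x
    rcases le_total 0 x with hx | hx
    · have := monotoneOn_of_deriv_nonneg (convex_Ici 0)
        (fun y _ => (hdiff y).continuousAt.continuousWithinAt)
        (fun y _ => (hdiff y).differentiableWithinAt)
        (fun y hy => by
          rw [interior_Ici] at hy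
          rw [hderiv_eq]
          have h2 := hulip y
          have h3 : |y| = y := abs_of_pos hy
          rw [abs_le] at h2
          linarith [h2.1, h2.2])
        (self_mem_Ici (a := (0:ℝ))) hx hx
      rw [hh0] at this
      exact this
    · have := antitoneOn_of_deriv_nonpos (convex_Iic 0)
        (fun y _ => (hdiff y).continuousAt.continuousWithinAt)
        (fun y _ => (hdiff y).differentiableWithinAt)
        (fun y hy => by
          rw [interior_Iic] at hy
          rw [hderiv_eq]
          have h2 := hulip y
          have h3 : |y| = -y := abs_of_neg hy
          rw [abs_le] at h2
          linarith [h2.1, h2.2])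
        hx (self_mem_Iic (a := (0:ℝ))) hx
      rw [hh0] at this
      exact this
  have hx := key l
  have hlog_le : Real.log (D l) ≤ l * p + l ^ 2 / 8 := by
    simp only [hhdef] at hx; linarith
  calc p * Real.exp l + (1 - p) = D l := rfl
    _ = Real.exp (Real.log (D l)) := (Real.exp_log (hD l)).symm
    _ ≤ Real.exp (l * p + l ^ 2 / 8) := Real.exp_le_exp.mpr hlog_le

end Bernoulli

lemma pi_pow {E : Type*} [MeasurableSpace E] (μ : Measure E) [SigmaFinite μ] (n : ℕ)
    (f : E → ℝ) :
    ∫ x : Fin n → E, ∏ i, f (x i) ∂(Measure.pi fun _ => μ) = (∫ x, f x ∂μ) ^ n := by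
  letI : MeasureSpace E := ⟨μ⟩
  have := MeasureTheory.integral_fintype_prod_eq_pow (𝕜 := ℝ) (ι := Fin n) (μ := μ) f
  simpa [MeasureTheory.volume_pi, Fintype.card_fin] using this

variable {μ : Measure ℝ} [IsProbabilityMeasure μ]

lemma cdf'_nonneg (t : ℝ) : 0 ≤ cdf' μ t := ENNReal.toReal_nonneg

lemma cdf'_le_one (t : ℝ) : cdf' μ t ≤ 1 := by
  have h : μ (Iic t) ≤ 1 := prob_le_one
  simpa [cdf'] using ENNReal.toReal_le_of_le_ofReal zero_le_one (by simpa using h)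

lemma empSum_meas (n : ℕ) (t : ℝ) :
    Measurable (fun ω : Fin n → ℝ => ∑ i : Fin n, if ω i ≤ t then (1 : ℝ) else 0) := by
  apply Finset.measurable_sum
  intro i _
  exact Measurable.ite ((measurable_pi_apply i) measurableSet_Iic)
    measurable_const measurable_const

lemma empSum_integrable_exp (n : ℕ) (t l : ℝ) :
    Integrable (fun ω : Fin n → ℝ =>
      Real.exp (l * ∑ i : Fin n, if ω i ≤ t then (1 : ℝ) else 0)) (iid μ n) := by
  haveI : IsProbabilityMeasure (iid μ n) := by unfold iid; infer_instance
  refine Integrable.mono' (integrable_const (Real.exp (|l| * n))) ?_ ?_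
  · exact ((empSum_meas n t).const_mul l).exp.aestronglyMeasurable
  · refine Filter.Eventually.of_forall fun ω => ?_
    rw [Real.norm_eq_abs, Real.abs_exp, Real.exp_le_exp]
    have h1 : (∑ i : Fin n, if ω i ≤ t then (1 : ℝ) else 0) ≤ n := by
      calc (∑ i : Fin n, if ω i ≤ t then (1 : ℝ) else 0) ≤ ∑ _i : Fin n, (1:ℝ) := by
            apply Finset.sum_le_sum; intro i _; split <;> norm_num
        _ = n := by simp
    have h2 : (0:ℝ) ≤ ∑ i : Fin n, if ω i ≤ t then (1 : ℝ) else 0 := by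
      apply Finset.sum_nonneg; intro i _; split <;> norm_num
    nlinarith [mul_le_mul_of_nonneg_right (le_abs_self l) h2,
      mul_le_mul_of_nonneg_left h1 (abs_nonneg l)]

lemma mgf_empSum (n : ℕ) (t l : ℝ) :
    ∫ ω, Real.exp (l * ∑ i : Fin n, if ω i ≤ t then (1 : ℝ) else 0) ∂(iid μ n)
      = (cdf' μ t * Real.exp l + (1 - cdf' μ t)) ^ n := by
  have hpt : ∀ ω : Fin n → ℝ,
      Real.exp (l * ∑ i : Fin n, if ω i ≤ t then (1 : ℝ) else 0)
        = ∏ i : Fin n, (fun z : ℝ => if z ≤ t then Real.exp l else 1) (ω i) := by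
    intro ω
    rw [Finset.mul_sum, Real.exp_sum]
    apply Finset.prod_congr rfl
    intro i _
    by_cases h : ω i ≤ t <;> simp [h]
  simp_rw [hpt]
  rw [iid]
  have hpi : ∫ ω : Fin n → ℝ, ∏ i : Fin n, (if ω i ≤ t then Real.exp l else 1)
      ∂(Measure.pi fun _ => μ)
      = (∫ z : ℝ, (if z ≤ t then Real.exp l else 1) ∂μ) ^ n :=
    pi_pow μ n (fun z => if z ≤ t then Real.exp l else 1)
  rw [hpi]
  congr 1
  have hfun : (fun z : ℝ => if z ≤ t then Real.exp l else 1)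
      = fun z => (Iic t).indicator (fun _ => Real.exp l - 1) z + 1 := by
    funext z
    by_cases h : z ≤ t <;> simp [indicator, h]
  rw [hfun, integral_add ((integrable_const _).indicator measurableSet_Iic)
    (integrable_const 1), integral_indicator_const _ measurableSet_Iic]
  simp [cdf']
  simp only [measureReal_def]
  ring

lemma empCdf_setOf (n : ℕ) (hn : 0 < n) (t r : ℝ) :
    {ω : Fin n → ℝ | r ≤ empCdf n ω t}
      = {ω : Fin n → ℝ | (n:ℝ) * r ≤ ∑ i : Fin n, if ω i ≤ t then (1 : ℝ) else 0} := by
  ext ω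
  simp only [mem_setOf_eq, empCdf]
  rw [le_div_iff₀ (by exact_mod_cast hn)]
  constructor <;> intro h <;> linarith

lemma empCdf_upper (n : ℕ) (hn : 0 < n) (t ε : ℝ) (hε : 0 ≤ ε) :
    iid μ n {ω | cdf' μ t + ε ≤ empCdf n ω t}
      ≤ ENNReal.ofReal (Real.exp (-(2 * n * ε ^ 2))) := by
  haveI : IsProbabilityMeasure (iid μ n) := by unfold iid; infer_instance
  set p := cdf' μ t with hp
  set X := fun ω : Fin n → ℝ => ∑ i : Fin n, if ω i ≤ t then (1 : ℝ) else 0 with hX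
  rw [empCdf_setOf n hn]
  rw [ENNReal.le_ofReal_iff_toReal_le (measure_ne_top _ _) (Real.exp_pos _).le]
  have hch := ProbabilityTheory.measure_ge_le_exp_mul_mgf (μ := iid μ n) (X := X)
    ((n:ℝ) * (p + ε)) (t := 4 * ε) (by linarith) (empSum_integrable_exp n t (4*ε))
  refine hch.trans ?_
  have hmgf : ProbabilityTheory.mgf X (iid μ n) (4*ε) = (p * Real.exp (4*ε) + (1 - p)) ^ n :=
    mgf_empSum n t (4*ε)
  rw [hmgf]
  have hb : (p * Real.exp (4*ε) + (1 - p)) ^ n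
      ≤ Real.exp ((n:ℝ) * ((4*ε) * p + (4*ε) ^ 2 / 8)) := by
    rw [Real.exp_nat_mul]
    apply pow_le_pow_left₀ _ (bernoulli_mgf_le (cdf'_nonneg t) (cdf'_le_one t) (4*ε))
    have := Real.exp_pos (4*ε)
    have := cdf'_nonneg (μ := μ) t
    have := cdf'_le_one (μ := μ) t
    nlinarith
  calc Real.exp (-(4 * ε) * ((n:ℝ) * (p + ε))) * (p * Real.exp (4*ε) + (1 - p)) ^ n
      ≤ Real.exp (-(4 * ε) * ((n:ℝ) * (p + ε))) * Real.exp ((n:ℝ) * ((4*ε) * p + (4*ε) ^ 2 / 8)) := by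
        apply mul_le_mul_of_nonneg_left hb (Real.exp_pos _).le
    _ = Real.exp (-(2 * n * ε ^ 2)) := by rw [← Real.exp_add]; congr 1; ring

lemma empCdf_lower (n : ℕ) (hn : 0 < n) (t ε : ℝ) (hε : 0 ≤ ε) :
    iid μ n {ω | empCdf n ω t ≤ cdf' μ t - ε}
      ≤ ENNReal.ofReal (Real.exp (-(2 * n * ε ^ 2))) := by
  haveI : IsProbabilityMeasure (iid μ n) := by unfold iid; infer_instance
  set p := cdf' μ t with hp
  set X := fun ω : Fin n → ℝ => ∑ i : Fin n, if ω i ≤ t then (1 : ℝ) else 0 with hX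
  have hset : {ω : Fin n → ℝ | empCdf n ω t ≤ p - ε}
      = {ω : Fin n → ℝ | X ω ≤ (n:ℝ) * (p - ε)} := by
    ext ω
    simp only [mem_setOf_eq, empCdf, hX]
    rw [div_le_iff₀ (by exact_mod_cast hn)]
    constructor <;> intro h <;> linarith
  rw [hset]
  rw [ENNReal.le_ofReal_iff_toReal_le (measure_ne_top _ _) (Real.exp_pos _).le]
  have hch := ProbabilityTheory.measure_le_le_exp_mul_mgf (μ := iid μ n) (X := X)
    ((n:ℝ) * (p - ε)) (t := -(4 * ε)) (by linarith) (empSum_integrable_exp n t (-(4*ε)))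
  refine hch.trans ?_
  have hmgf : ProbabilityTheory.mgf X (iid μ n) (-(4*ε)) = (p * Real.exp (-(4*ε)) + (1 - p)) ^ n :=
    mgf_empSum n t (-(4*ε))
  rw [hmgf]
  have hb : (p * Real.exp (-(4*ε)) + (1 - p)) ^ n
      ≤ Real.exp ((n:ℝ) * ((-(4*ε)) * p + (-(4*ε)) ^ 2 / 8)) := by
    rw [Real.exp_nat_mul]
    apply pow_le_pow_left₀ _ (bernoulli_mgf_le (cdf'_nonneg t) (cdf'_le_one t) (-(4*ε)))
    have := Real.exp_pos (-(4*ε))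
    have := cdf'_nonneg (μ := μ) t
    have := cdf'_le_one (μ := μ) t
    nlinarith
  calc Real.exp (-(-(4 * ε)) * ((n:ℝ) * (p - ε))) * (p * Real.exp (-(4*ε)) + (1 - p)) ^ n
      ≤ Real.exp (-(-(4 * ε)) * ((n:ℝ) * (p - ε)))
          * Real.exp ((n:ℝ) * ((-(4*ε)) * p + (-(4*ε)) ^ 2 / 8)) := by
        apply mul_le_mul_of_nonneg_left hb (Real.exp_pos _).le
    _ = Real.exp (-(2 * n * ε ^ 2)) := by rw [← Real.exp_add]; congr 1; ring

section CdfLemmas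

variable {μ : Measure ℝ} [IsProbabilityMeasure μ]

lemma cdf'_nonneg' (t : ℝ) : 0 ≤ cdf' μ t := ENNReal.toReal_nonneg

omit [IsProbabilityMeasure μ] in
lemma cdf'_mono [IsFiniteMeasure μ] : Monotone (cdf' μ) := fun a b hab =>
  ENNReal.toReal_mono (measure_ne_top μ _) (measure_mono (Iic_subset_Iic.2 hab))

/-- right-continuity of the CDF at the infimum of a quantile set -/
lemma le_cdf'_sInf {r : ℝ}
    (hne : ({a : ℝ | 0 ≤ a ∧ r ≤ cdf' μ a}).Nonempty) :
    r ≤ cdf' μ (sInf {a : ℝ | 0 ≤ a ∧ r ≤ cdf' μ a}) := by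
  rcases le_or_gt r 0 with hr | hr
  · exact hr.trans (cdf'_nonneg' _)
  set c := sInf {a : ℝ | 0 ≤ a ∧ r ≤ cdf' μ a} with hc
  have hbdd : BddBelow {a : ℝ | 0 ≤ a ∧ r ≤ cdf' μ a} := ⟨0, fun x hx => hx.1⟩
  have hgt : ∀ t, c < t → r ≤ cdf' μ t := by
    intro t ht
    obtain ⟨s, hs, hst⟩ := exists_lt_of_csInf_lt hne ht
    exact hs.2.trans (cdf'_mono hst.le)
  have hinter : (⋂ k : ℕ, Iic (c + 1 / (k + 1))) = Iic c := by
    ext z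
    simp only [mem_iInter, mem_Iic]
    constructor
    · intro h
      by_contra hz
      push_neg at hz
      obtain ⟨k, hk⟩ := exists_nat_one_div_lt (by linarith : (0:ℝ) < z - c)
      have := h k
      push_cast at hk this
      linarith
    · intro h k
      have : (0:ℝ) < 1 / (k + 1) := by positivity
      linarith
  have hmeas : μ (Iic c) = ⨅ k : ℕ, μ (Iic (c + 1 / (k + 1))) := by
    rw [← hinter]
    refine Antitone.measure_iInter ?_ (fun k => measurableSet_Iic.nullMeasurableSet) ⟨0, measure_ne_top _ _⟩
    intro i j hij
    apply Iic_subset_Iic.2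
    have hij' : (i:ℝ) ≤ j := by exact_mod_cast hij
    have : (1:ℝ) / (j + 1) ≤ 1 / (i + 1) := by
      apply one_div_le_one_div_of_le (by positivity)
      linarith
    linarith
  have hlb : ENNReal.ofReal r ≤ μ (Iic c) := by
    rw [hmeas]
    refine le_iInf fun k => ?_
    have hk : c < c + 1 / (k + 1) := by
      have : (0:ℝ) < 1 / (k + 1) := by positivity
      linarith
    have := hgt _ hk
    rw [← ENNReal.ofReal_toReal (measure_ne_top μ (Iic (c + 1 / (k+1))))]
    exact ENNReal.ofReal_le_ofReal this
  have := ENNReal.toReal_mono (measure_ne_top μ _) hlb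
  rwa [ENNReal.toReal_ofReal hr.le] at this

/-- Markov: the CDF of a nonnegative distribution with mean at most one. -/
lemma markov_cdf (hsupp : μ (Iio 0) = 0) (hmean : Integrable (fun z => z) μ)
    (hmean1 : (∫ z, z ∂μ) ≤ 1) {a : ℝ} (ha : 0 < a) :
    1 - 1 / a ≤ cdf' μ a := by
  have hz : 0 ≤ᵐ[μ] fun z => z := by
    rw [Filter.EventuallyLE, ae_iff]
    simpa using (show μ {a : ℝ | a < 0} = 0 from hsupp)
  have hmark := mul_meas_ge_le_integral_of_nonneg hz hmean a
  have h1 : (μ {x : ℝ | a ≤ x}).toReal ≤ 1 / a := by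
    rw [le_div_iff₀ ha, mul_comm]
    exact hmark.trans hmean1
  have h2 : μ (Ioi a) ≤ μ {x : ℝ | a ≤ x} := measure_mono fun x hx => show a ≤ x from le_of_lt hx
  have h3 : (μ (Ioi a)).toReal ≤ 1 / a :=
    (ENNReal.toReal_mono (measure_ne_top _ _) h2).trans h1
  have h4 : cdf' μ a = 1 - (μ (Ioi a)).toReal := by
    have hsum : μ (Iic a) + μ (Ioi a) = 1 := by
      have := measure_add_measure_compl (μ := μ) (measurableSet_Iic (a := a))
      rwa [compl_Iic, measure_univ] at this
    have := congrArg ENNReal.toReal hsum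
    rw [ENNReal.toReal_add (measure_ne_top _ _) (measure_ne_top _ _), ENNReal.toReal_one] at this
    rw [cdf']
    linarith
  rw [h4]
  linarith

end CdfLemmas

section LossLemmas

variable {μ : Measure ℝ} [IsProbabilityMeasure μ]

lemma nvLoss_eq (q a z : ℝ) : nvLoss q a z = q * (z - a) + max (a - z) 0 := by
  unfold nvLoss
  rcases le_total z a with h | h
  · rw [max_eq_right (by linarith), max_eq_left (by linarith)]; ring
  · rw [max_eq_left (by linarith), max_eq_right (by linarith)]; ring

lemma int_pos_part (hmean : Integrable (fun z => z) μ) (a : ℝ) :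
    Integrable (fun z => max (a - z) 0) μ :=
  ((integrable_const a).sub hmean).pos_part

lemma expLoss_eq (hmean : Integrable (fun z => z) μ) (q a : ℝ) :
    expLoss q μ a = q * ((∫ z, z ∂μ) - a) + ∫ z, max (a - z) 0 ∂μ := by
  unfold expLoss
  have h1 : (fun z => nvLoss q a z) = fun z => q * (z - a) + max (a - z) 0 :=
    funext fun z => nvLoss_eq q a z
  have hint1 : Integrable (fun z : ℝ => q * (z - a)) μ := by
    exact Integrable.const_mul (hmean.sub (integrable_const a)) q
  have hint1' : Integrable (fun z : ℝ => z - a) μ := by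
    exact hmean.sub (integrable_const a)
  rw [h1, integral_add hint1 (int_pos_part hmean a), MeasureTheory.integral_const_mul,
    integral_sub hmean (integrable_const a), integral_const]
  simp [measure_univ]

end LossLemmas

section Det

lemma empCdf_mono {n : ℕ} (ω : Fin n → ℝ) : Monotone (empCdf n ω) := by
  intro z1 z2 h
  unfold empCdf
  rcases Nat.eq_zero_or_pos n with hn | hn
  · subst hn; simp
  have hn' : (0:ℝ) < n := by exact_mod_cast hn
  rw [div_le_div_iff_of_pos_right hn']
  apply Finset.sum_le_sum
  intro i _
  split_ifs with h1 h2
  · exact le_refl _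
  · exact absurd (h1.trans h) h2
  · norm_num
  · exact le_refl _

lemma aux_q_le {q : ℝ} (h0 : 0 < q) (h1 : q < 1) : q * (1 - q) ≤ 1 := by nlinarith

lemma regret_det
    (q : ℝ) (hq : q ∈ Ioo (0:ℝ) 1)
    (μ : Measure ℝ) [IsProbabilityMeasure μ] (hsupp : μ (Iio 0) = 0)
    (hmean : Integrable (fun z => z) μ) (hmean1 : (∫ z, z ∂μ) ≤ 1)
    (n : ℕ) (hn1 : 1 ≤ n) (ε : ℝ) (hε : 0 < ε) (hεq : ε ≤ (1 - q) / 2)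
    (ω : Fin n → ℝ)
    (hE1 : q ≤ empCdf n ω (sInf {a : ℝ | 0 ≤ a ∧ q + ε ≤ cdf' μ a}))
    (hE2 : empCdf n ω (sInf {a : ℝ | 0 ≤ a ∧ q - ε ≤ cdf' μ a} - ε) < q) :
    expLoss q μ (saa q n ω) - expLoss q μ (optDec q μ) ≤ (2 / (1 - q)) * ε := by
  obtain ⟨hq0, hq1⟩ := hq
  have h1q : 0 < 1 - q := by linarith
  set b := sInf {a : ℝ | 0 ≤ a ∧ q + ε ≤ cdf' μ a} with hbdef
  set c := sInf {a : ℝ | 0 ≤ a ∧ q - ε ≤ cdf' μ a} with hcdef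
  set A := optDec q μ with hAdef
  set ahat := saa q n ω with hahatdef
  have hbddb : BddBelow {a : ℝ | 0 ≤ a ∧ q + ε ≤ cdf' μ a} := ⟨0, fun x hx => hx.1⟩
  have hbddc : BddBelow {a : ℝ | 0 ≤ a ∧ q - ε ≤ cdf' μ a} := ⟨0, fun x hx => hx.1⟩
  have hbddq : BddBelow {a : ℝ | 0 ≤ a ∧ q ≤ cdf' μ a} := ⟨0, fun x hx => hx.1⟩
  have hmem_b : (2 / (1 - q)) ∈ {a : ℝ | 0 ≤ a ∧ q + ε ≤ cdf' μ a} := by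
    constructor
    · positivity
    · have hm := markov_cdf hsupp hmean hmean1 (a := 2 / (1 - q)) (by positivity)
      rw [one_div_div] at hm
      linarith
  have hmem_q : (1 / (1 - q)) ∈ {a : ℝ | 0 ≤ a ∧ q ≤ cdf' μ a} := by
    constructor
    · positivity
    · have hm := markov_cdf hsupp hmean hmean1 (a := 1 / (1 - q)) (by positivity)
      rw [one_div_one_div] at hm
      linarith
  have hSb_ne : {a : ℝ | 0 ≤ a ∧ q + ε ≤ cdf' μ a}.Nonempty := ⟨_, hmem_b⟩
  have hSq_ne : {a : ℝ | 0 ≤ a ∧ q ≤ cdf' μ a}.Nonempty := ⟨_, hmem_q⟩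
  have hSc_ne : {a : ℝ | 0 ≤ a ∧ q - ε ≤ cdf' μ a}.Nonempty :=
    ⟨_, ⟨hmem_q.1, by linarith [hmem_q.2]⟩⟩
  have hb0 : 0 ≤ b := le_csInf hSb_ne fun x hx => hx.1
  have hc0 : 0 ≤ c := le_csInf hSc_ne fun x hx => hx.1
  have hA0 : 0 ≤ A := le_csInf hSq_ne fun x hx => hx.1
  have hb_le : b ≤ 2 / (1 - q) := csInf_le hbddb hmem_b
  have hA_le : A ≤ 1 / (1 - q) := csInf_le hbddq hmem_q
  have hcA : c ≤ A := csInf_le_csInf hbddc hSq_ne fun x hx => ⟨hx.1, by linarith [hx.2]⟩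
  have hFb : q + ε ≤ cdf' μ b := le_cdf'_sInf hSb_ne
  have hFc : q - ε ≤ cdf' μ c := le_cdf'_sInf hSc_ne
  -- the SAA quantile set is nonempty
  haveI : Nonempty (Fin n) := ⟨⟨0, hn1⟩⟩
  set M := max 0 (Finset.univ.sup' Finset.univ_nonempty ω) with hMdef
  have hMval : (∑ i : Fin n, if ω i ≤ M then (1:ℝ) else 0) = n := by
    rw [Finset.sum_congr rfl (fun i _ => if_pos
      ((Finset.le_sup' ω (Finset.mem_univ i)).trans (le_max_right _ _)))]
    simp
  have hS'_ne : {a : ℝ | 0 ≤ a ∧ q ≤ empCdf n ω a}.Nonempty := by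
    refine ⟨M, le_max_left _ _, ?_⟩
    unfold empCdf
    rw [hMval, div_self (by positivity : (n:ℝ) ≠ 0)]
    linarith
  have hahat0 : 0 ≤ ahat := Real.sInf_nonneg fun x hx => hx.1
  have hahatb : ahat ≤ b := csInf_le ⟨0, fun x hx => hx.1⟩ ⟨hb0, hE1⟩
  have hahatc : c - ε ≤ ahat := by
    by_contra h
    push_neg at h
    obtain ⟨x, hx, hlt⟩ := exists_lt_of_csInf_lt hS'_ne h
    have := hx.2.trans (empCdf_mono ω hlt.le)
    linarith
  -- bound on the measure of Iio ahat
  have hFt : ∀ t, t < ahat → cdf' μ t ≤ q + ε := by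
    intro t ht
    have htb : t < b := lt_of_lt_of_le ht hahatb
    have hnot := notMem_of_lt_csInf htb hbddb
    rcases le_or_gt 0 t with h0 | h0
    · by_contra hcon
      push_neg at hcon
      exact hnot ⟨h0, hcon.le⟩
    · have : μ (Iic t) = 0 :=
        measure_mono_null (fun x hx => lt_of_le_of_lt hx h0) hsupp
      rw [cdf', this]
      simp
      positivity
  have hIio : (μ (Iio ahat)).toReal ≤ q + ε := by
    have hunion : Iio ahat = ⋃ k : ℕ, Iic (ahat - 1 / (k + 1)) := by
      ext z
      simp only [mem_Iio, mem_iUnion, mem_Iic]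
      constructor
      · intro h
        obtain ⟨k, hk⟩ := exists_nat_one_div_lt (by linarith : (0:ℝ) < ahat - z)
        exact ⟨k, by push_cast at hk ⊢; linarith⟩
      · intro ⟨k, hk⟩
        have : (0:ℝ) < 1 / (k + 1) := by positivity
        linarith
    have hmono : Monotone (fun k : ℕ => Iic (ahat - 1 / (k + 1 : ℝ))) := by
      intro i j hij
      apply Iic_subset_Iic.2
      have hij' : (i:ℝ) ≤ j := by exact_mod_cast hij
      have : (1:ℝ) / (j + 1) ≤ 1 / (i + 1) := by
        apply one_div_le_one_div_of_le (by positivity)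
        linarith
      linarith
    have hm : μ (Iio ahat) = ⨆ k : ℕ, μ (Iic (ahat - 1 / (k + 1))) := by
      rw [hunion]
      exact Directed.measure_iUnion hmono.directed_le
    have hub : μ (Iio ahat) ≤ ENNReal.ofReal (q + ε) := by
      rw [hm]
      refine iSup_le fun k => ?_
      have hk : ahat - 1 / (k + 1 : ℝ) < ahat := by
        have : (0:ℝ) < 1 / (k + 1) := by positivity
        linarith
      have := hFt _ hk
      rw [← ENNReal.ofReal_toReal (measure_ne_top μ (Iic (ahat - 1 / (k+1))))]
      exact ENNReal.ofReal_le_ofReal this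
    exact ENNReal.toReal_le_of_le_ofReal (by positivity) hub
  have hintahat := int_pos_part hmean ahat
  have hintA := int_pos_part hmean A
  rw [expLoss_eq hmean q ahat, expLoss_eq hmean q A]
  rcases le_or_gt A ahat with hcase | hcase
  · -- ahat ≥ A
    have hpt : ∀ z, max (ahat - z) 0 - max (A - z) 0 ≤ (Iio ahat).indicator (fun _ => ahat - A) z := by
      intro z
      rw [Set.indicator_apply]
      split_ifs with hz
      · have h1 : ahat - z ≤ max (A - z) 0 + (ahat - A) := by
          have := le_max_left (A - z) 0
          linarith
        have h2 : (0:ℝ) ≤ max (A - z) 0 + (ahat - A) :=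
          add_nonneg (le_max_right _ _) (by linarith)
        have := max_le h1 h2
        linarith
      · simp only [mem_Iio, not_lt] at hz
        have h1 : max (ahat - z) 0 = 0 := max_eq_right (by linarith)
        have h2 : (0:ℝ) ≤ max (A - z) 0 := le_max_right _ _
        linarith
    have hintdiff : Integrable (fun z => max (ahat - z) 0 - max (A - z) 0) μ :=
      hintahat.sub hintA
    have hmono := integral_mono hintdiff
      ((integrable_const (ahat - A)).indicator measurableSet_Iio) hpt
    rw [integral_indicator_const _ measurableSet_Iio] at hmono
    have hsubint : ∫ z, (max (ahat - z) 0 - max (A - z) 0) ∂μ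
        = (∫ z, max (ahat - z) 0 ∂μ) - ∫ z, max (A - z) 0 ∂μ := integral_sub hintahat hintA
    rw [hsubint, smul_eq_mul] at hmono
    have hprod : (μ (Iio ahat)).toReal * (ahat - A) ≤ (q + ε) * (ahat - A) :=
      mul_le_mul_of_nonneg_right hIio (by linarith)
    have hfinal : (ahat - A) * ε ≤ (2 / (1 - q)) * ε := by
      apply mul_le_mul_of_nonneg_right _ hε.le
      linarith
    rw [measureReal_def] at hmono
    linarith [hmono, hprod, hfinal]
  · -- ahat < A
    rcases le_or_gt c ahat with hsub | hsub
    · -- c ≤ ahat < A : use d = ahat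
      have hpt : ∀ z, (Iic ahat).indicator (fun _ => A - ahat) z
          ≤ max (A - z) 0 - max (ahat - z) 0 := by
        intro z
        rw [Set.indicator_apply]
        split_ifs with hz
        · simp only [mem_Iic] at hz
          rw [max_eq_left (by linarith : (0:ℝ) ≤ A - z),
            max_eq_left (by linarith : (0:ℝ) ≤ ahat - z)]
          linarith
        · simp only [mem_Iic, not_le] at hz
          have := max_le_max (by linarith : ahat - z ≤ A - z) (le_refl (0:ℝ))
          linarith
      have hintdiff : Integrable (fun z => max (A - z) 0 - max (ahat - z) 0) μ :=
        hintA.sub hintahat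
      have hmono := integral_mono
        ((integrable_const (A - ahat)).indicator measurableSet_Iic) hintdiff hpt
      rw [integral_indicator_const _ measurableSet_Iic, smul_eq_mul] at hmono
      have hsubint : ∫ z, (max (A - z) 0 - max (ahat - z) 0) ∂μ
          = (∫ z, max (A - z) 0 ∂μ) - ∫ z, max (ahat - z) 0 ∂μ := integral_sub hintA hintahat
      rw [hsubint] at hmono
      have hFahat : q - ε ≤ cdf' μ ahat := hFc.trans (cdf'_mono hsub)
      have h1 : (q - ε) * (A - ahat) ≤ (μ (Iic ahat)).toReal * (A - ahat) :=
        mul_le_mul_of_nonneg_right hFahat (by linarith)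
      have h2 : (A - ahat) * ε ≤ (1 / (1 - q)) * ε := by
        apply mul_le_mul_of_nonneg_right _ hε.le
        linarith
      have h3 : (1 / (1 - q)) * ε ≤ (2 / (1 - q)) * ε := by
        apply mul_le_mul_of_nonneg_right _ hε.le
        have h2q : (2:ℝ) / (1 - q) = 1 / (1 - q) + 1 / (1 - q) := by ring
        have := one_div_pos.mpr h1q
        linarith
      rw [measureReal_def] at hmono
      linarith [hmono, h1, h2, h3]
    · -- ahat < c : use d = c
      have hpt : ∀ z, (Iic c).indicator (fun _ => A - c) z
          ≤ max (A - z) 0 - max (ahat - z) 0 := by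
        intro z
        rw [Set.indicator_apply]
        split_ifs with hz
        · simp only [mem_Iic] at hz
          rw [max_eq_left (by linarith : (0:ℝ) ≤ A - z)]
          have : max (ahat - z) 0 ≤ c - z := max_le (by linarith) (by linarith)
          linarith
        · simp only [mem_Iic, not_le] at hz
          have := max_le_max (by linarith : ahat - z ≤ A - z) (le_refl (0:ℝ))
          linarith
      have hintdiff : Integrable (fun z => max (A - z) 0 - max (ahat - z) 0) μ :=
        hintA.sub hintahat
      have hmono := integral_mono
        ((integrable_const (A - c)).indicator measurableSet_Iic) hintdiff hpt
      rw [integral_indicator_const _ measurableSet_Iic, smul_eq_mul] at hmono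
      have hsubint : ∫ z, (max (A - z) 0 - max (ahat - z) 0) ∂μ
          = (∫ z, max (A - z) 0 ∂μ) - ∫ z, max (ahat - z) 0 ∂μ := integral_sub hintA hintahat
      rw [hsubint] at hmono
      have h1 : (q - ε) * (A - c) ≤ (μ (Iic c)).toReal * (A - c) :=
        mul_le_mul_of_nonneg_right hFc (by linarith)
      -- q * (c - ahat) ≤ q * ε  and  (A - c) * ε ≤ (1/(1-q)) * ε
      have h2 : c - ahat ≤ ε := by linarith
      have h3 : A - c ≤ 1 / (1 - q) := by linarith
      have hkey : q * (A - ahat) - (A - c) * (q - ε) ≤ (2 / (1 - q)) * ε := by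
        have e1 : q * (A - ahat) - (A - c) * (q - ε) = q * (c - ahat) + (A - c) * ε := by ring
        rw [e1]
        have e2 : q * (c - ahat) ≤ q * ε := mul_le_mul_of_nonneg_left h2 hq0.le
        have e3 : (A - c) * ε ≤ (1 / (1 - q)) * ε :=
          mul_le_mul_of_nonneg_right h3 hε.le
        have hq' : q ≤ 1 / (1 - q) := by
          rw [le_div_iff₀ h1q]
          exact aux_q_le hq0 hq1
        have e4 : q * ε + (1 / (1 - q)) * ε ≤ (2 / (1 - q)) * ε := by
          have h2q : (2:ℝ) / (1 - q) * ε = 1 / (1 - q) * ε + 1 / (1 - q) * ε := by ring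
          have e5 : q * ε ≤ 1 / (1 - q) * ε := mul_le_mul_of_nonneg_right hq' hε.le
          linarith [e5, h2q]
        linarith [e2, e3, e4]
      rw [measureReal_def] at hmono
      linarith [hmono, h1, hkey]

end Det

/-- High-probability additive regret upper bound for SAA on any distribution
with mean at most 1: if `n ≥ 2·log(2/δ)/(1−q)²`, then with probability at least `1−δ`,
`L(â) − L(a*) ≤ (2/(1−q))·√(log(2/δ)/(2n))`. -/
theorem saa_high_prob_additive_regret_general
    (q : ℝ) (hq : q ∈ Ioo (0:ℝ) 1)
    (μ : Measure ℝ) [IsProbabilityMeasure μ] (hsupp : μ (Iio 0) = 0)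
    (hmean : Integrable (fun z => z) μ) (hmean1 : (∫ z, z ∂μ) ≤ 1)
    (n : ℕ) (δ : ℝ) (hδ : δ ∈ Ioo (0:ℝ) 1)
    (hn : 2 * Real.log (2/δ) / (1 - q)^2 ≤ n) :
    ENNReal.ofReal (1 - δ) ≤
      (iid μ n) {ω | expLoss q μ (saa q n ω) - expLoss q μ (optDec q μ)
        ≤ (2/(1-q)) * Real.sqrt (Real.log (2/δ) / (2*n))} := by
  obtain ⟨hq0, hq1⟩ := hq
  obtain ⟨hδ0, hδ1⟩ := hδ
  have h1q : 0 < 1 - q := by linarith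
  have hlog : 0 < Real.log (2/δ) := Real.log_pos (by rw [lt_div_iff₀ hδ0]; linarith)
  have hn0 : 0 < n := by
    by_contra h
    push_neg at h
    have hz : n = 0 := Nat.le_zero.mp h
    have hpos : (0:ℝ) < 2 * Real.log (2/δ) / (1 - q)^2 := by positivity
    rw [hz] at hn
    norm_num at hn
    linarith
  have hn' : (0:ℝ) < n := by exact_mod_cast hn0
  set L := Real.log (2/δ) with hL
  set ε := Real.sqrt (L / (2*n)) with hεdef
  have hεpos : 0 < ε := Real.sqrt_pos.mpr (by positivity)
  have hsq : ε^2 = L/(2*n) := Real.sq_sqrt (by positivity)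
  have h2L : 2 * L ≤ n * (1-q)^2 := by
    have := (div_le_iff₀ (by positivity : (0:ℝ) < (1-q)^2)).mp hn
    linarith
  have hεq : ε ≤ (1 - q)/2 := by
    have h4 : L/(2*n) ≤ ((1-q)/2)^2 := by
      rw [div_le_iff₀ (by positivity)]
      have he : ((1-q)/2)^2 * (2*(n:ℝ)) = n * (1-q)^2 / 2 := by ring
      rw [he]
      linarith
    calc ε = Real.sqrt (L/(2*n)) := rfl
      _ ≤ Real.sqrt (((1-q)/2)^2) := Real.sqrt_le_sqrt h4
      _ = (1-q)/2 := Real.sqrt_sq (by linarith)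
  have hexp : Real.exp (-(2 * n * ε^2)) = δ/2 := by
    rw [hsq]
    have he : 2 * (n:ℝ) * (L/(2*n)) = L := by field_simp
    rw [he, hL, Real.exp_neg, Real.exp_log (by positivity), inv_div]
  haveI : IsProbabilityMeasure (iid μ n) := by unfold iid; infer_instance
  set b := sInf {a : ℝ | 0 ≤ a ∧ q + ε ≤ cdf' μ a} with hb
  set c := sInf {a : ℝ | 0 ≤ a ∧ q - ε ≤ cdf' μ a} with hc
  have hmem_b : (2 / (1 - q)) ∈ {a : ℝ | 0 ≤ a ∧ q + ε ≤ cdf' μ a} := by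
    constructor
    · positivity
    · have hm := markov_cdf hsupp hmean hmean1 (a := 2 / (1 - q)) (by positivity)
      rw [one_div_div] at hm
      linarith
  set E1 := {ω : Fin n → ℝ | q ≤ empCdf n ω b} with hE1def
  set E2 := {ω : Fin n → ℝ | empCdf n ω (c - ε) < q} with hE2def
  have hsubset : E1 ∩ E2 ⊆ {ω | expLoss q μ (saa q n ω) - expLoss q μ (optDec q μ)
      ≤ (2/(1-q)) * ε} := by
    intro ω hω
    exact regret_det q ⟨hq0, hq1⟩ μ hsupp hmean hmean1 n hn0 ε hεpos hεq ω hω.1 hω.2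
  have hE1c : iid μ n E1ᶜ ≤ ENNReal.ofReal (δ/2) := by
    have hFb : q + ε ≤ cdf' μ b := le_cdf'_sInf ⟨_, hmem_b⟩
    have hsub2 : E1ᶜ ⊆ {ω : Fin n → ℝ | empCdf n ω b ≤ cdf' μ b - ε} := by
      intro ω hω
      simp only [hE1def, mem_compl_iff, mem_setOf_eq, not_le] at hω
      simp only [mem_setOf_eq]
      linarith
    calc iid μ n E1ᶜ ≤ iid μ n {ω : Fin n → ℝ | empCdf n ω b ≤ cdf' μ b - ε} :=
          measure_mono hsub2
      _ ≤ ENNReal.ofReal (Real.exp (-(2 * n * ε^2))) := empCdf_lower n hn0 b ε hεpos.le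
      _ = ENNReal.ofReal (δ/2) := by rw [hexp]
  have hE2c : iid μ n E2ᶜ ≤ ENNReal.ofReal (δ/2) := by
    rcases le_or_gt 0 (c - ε) with hge | hlt
    · have hcε_not : cdf' μ (c - ε) ≤ q - ε := by
        have hne : c - ε < c := by linarith
        have hnotmem := notMem_of_lt_csInf hne ⟨0, fun x hx => hx.1⟩
        by_contra hcon
        push_neg at hcon
        exact hnotmem ⟨hge, hcon.le⟩
      have hsub2 : E2ᶜ ⊆ {ω : Fin n → ℝ | cdf' μ (c-ε) + ε ≤ empCdf n ω (c-ε)} := by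
        intro ω hω
        simp only [hE2def, mem_compl_iff, mem_setOf_eq, not_lt] at hω
        simp only [mem_setOf_eq]
        linarith
      calc iid μ n E2ᶜ ≤ iid μ n {ω : Fin n → ℝ | cdf' μ (c-ε) + ε ≤ empCdf n ω (c-ε)} :=
            measure_mono hsub2
        _ ≤ ENNReal.ofReal (Real.exp (-(2 * n * ε^2))) := empCdf_upper n hn0 (c-ε) ε hεpos.le
        _ = ENNReal.ofReal (δ/2) := by rw [hexp]
    · have hnull : iid μ n E2ᶜ = 0 := by
        have hsub2 : E2ᶜ ⊆ ⋃ i : Fin n, (fun ω : Fin n → ℝ => ω i) ⁻¹' (Iio 0) := by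
          intro ω hω
          simp only [hE2def, mem_compl_iff, mem_setOf_eq, not_lt] at hω
          by_contra hcon
          simp only [mem_iUnion, mem_preimage, mem_Iio, not_exists, not_lt] at hcon
          have hzero : empCdf n ω (c - ε) = 0 := by
            unfold empCdf
            rw [Finset.sum_eq_zero, zero_div]
            intro i _
            rw [if_neg]
            intro hle
            linarith [hcon i]
          rw [hzero] at hω
          linarith
        refine measure_mono_null hsub2 (measure_iUnion_null fun i => ?_)
        exact MeasureTheory.Measure.pi_eval_preimage_null
          (μ := fun _ : Fin n => μ) (i := i) (s := Iio 0) hsupp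
      rw [hnull]
      exact zero_le
  have hcompl : iid μ n (E1 ∩ E2)ᶜ ≤ ENNReal.ofReal δ := by
    rw [Set.compl_inter]
    calc iid μ n (E1ᶜ ∪ E2ᶜ) ≤ iid μ n E1ᶜ + iid μ n E2ᶜ := measure_union_le _ _
      _ ≤ ENNReal.ofReal (δ/2) + ENNReal.ofReal (δ/2) := add_le_add hE1c hE2c
      _ = ENNReal.ofReal δ := by
          rw [← ENNReal.ofReal_add (by linarith) (by linarith)]
          norm_num
  have h1le : (1 : ENNReal) ≤ iid μ n (E1 ∩ E2) + ENNReal.ofReal δ := by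
    have hu := measure_union_le (μ := iid μ n) (E1 ∩ E2) (E1 ∩ E2)ᶜ
    rw [union_compl_self, measure_univ] at hu
    exact hu.trans (add_le_add le_rfl hcompl)
  have hfinal : ENNReal.ofReal (1 - δ) ≤ iid μ n (E1 ∩ E2) := by
    rw [ENNReal.ofReal_sub _ hδ0.le, ENNReal.ofReal_one]
    exact tsub_le_iff_right.mpr h1le
  exact hfinal.trans (measure_mono hsubset)
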